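/- In the setting of the complex $(\mathbb{C}[(K\oplus K^{\vee})_0]\otimes\Lambda^*(M_{\mathbb{C}}),\, d^A_{f,g})$, the conformal grading assigning to $[m\oplus n]\otimes P$ (with $P$ homogeneous in $\Lambda^*(M_{\mathbb{C}})$) the degree $-m\cdot\deg^{\vee}+\deg\cdot n+\deg(P)-\deg\cdot\deg^{\vee}$ is preserved by $d^A_{f,g}$, while the grading $m\cdot\deg^{\vee}+\deg\cdot n$ is increased by exactly $1$ by $d^A_{f,g}$. -/
import Mathlib


noncomputable section

open scoped Classical

/-- The pairing between the dual lattices `M = N = ℤ^d`. -/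
def dotZ {d : ℕ} (m n : Fin d → ℤ) : ℤ := ∑ i, m i * n i

variable {d : ℕ}

/-- The exterior algebra `Λ^*(M_ℂ)`. -/
abbrev Lam (d : ℕ) := ExteriorAlgebra ℂ (Fin d → ℂ)

/-- The `k`-th graded piece `Λ^k(M_ℂ)`. -/
def LamPiece (d k : ℕ) : Submodule ℂ (Lam d) :=
  LinearMap.range (ExteriorAlgebra.ι ℂ : (Fin d → ℂ) →ₗ[ℂ] Lam d) ^ k

/-- The ambient module; the complex `ℂ[(K ⊕ K^∨)₀] ⊗ Λ^*(M_ℂ)` is its subspace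
supported on pairs `(m, n)` with `m ∈ K_M`, `n ∈ K_N`, `m·n = 0`. -/
abbrev Amb (d : ℕ) := ((Fin d → ℤ) × (Fin d → ℤ)) →₀ Lam d

def Adm (KM KN : AddSubmonoid (Fin d → ℤ)) (p : (Fin d → ℤ) × (Fin d → ℤ)) : Prop :=
  p.1 ∈ KM ∧ p.2 ∈ KN ∧ dotZ p.1 p.2 = 0

/-- Reduction modulo the monomials `[m ⊕ n]` with `m·n > 0`. -/
def projA (KM KN : AddSubmonoid (Fin d → ℤ)) : Amb d →ₗ[ℂ] Amb d :=
  Finsupp.lsum ℂ fun p => if Adm KM KN p then (Finsupp.lsingle p : Lam d →ₗ[ℂ] Amb d) else 0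

/-- Multiplication by the monomial `[a.1 ⊕ a.2]`. -/
def shiftA (a : (Fin d → ℤ) × (Fin d → ℤ)) : Amb d →ₗ[ℂ] Amb d :=
  Finsupp.lmapDomain (Lam d) ℂ (fun p => p + a)

/-- Exterior multiplication by `m` on the `Λ^*(M_ℂ)` factor. -/
def wedgeA (m : Fin d → ℤ) : Amb d →ₗ[ℂ] Amb d :=
  Finsupp.mapRange.linearMap
    (LinearMap.mulLeft ℂ (ExteriorAlgebra.ι ℂ (fun i => (m i : ℂ))))

/-- Contraction by `n` on the `Λ^*(M_ℂ)` factor. -/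
def contrA (n : Fin d → ℤ) : Amb d →ₗ[ℂ] Amb d :=
  Finsupp.mapRange.linearMap
    (CliffordAlgebra.contractLeft (Q := (0 : QuadraticForm ℂ (Fin d → ℂ)))
      (∑ i, (n i : ℂ) • LinearMap.proj i))

/-- The operator `d^A_{f,g}`. -/
def dA (KM KN : AddSubmonoid (Fin d → ℤ)) (Δ ΔV : Finset (Fin d → ℤ))
    (f g : (Fin d → ℤ) → ℂ) : Amb d →ₗ[ℂ] Amb d :=
  (∑ m ∈ Δ, f m • (projA KM KN ∘ₗ shiftA (m, 0) ∘ₗ wedgeA m)) +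
  (∑ n ∈ ΔV, g n • (projA KM KN ∘ₗ shiftA (0, n) ∘ₗ contrA n))

/-- The conformal-degree-`c` subspace: spanned by `[m ⊕ n] ⊗ P` with `P` of exterior
degree `k` and `−m·deg^∨ + deg·n + k − deg·deg^∨ = c`. -/
def Wconf (deg degV : Fin d → ℤ) (c : ℤ) : Submodule ℂ (Amb d) :=
  ⨆ (p : (Fin d → ℤ) × (Fin d → ℤ)) (k : ℕ)
    (_ : -dotZ p.1 degV + dotZ deg p.2 + (k : ℤ) - dotZ deg degV = c),
    (LamPiece d k).map (Finsupp.lsingle p)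

/-- The cohomological-degree-`c` subspace: spanned by `[m ⊕ n] ⊗ P` with
`m·deg^∨ + deg·n = c`. -/
def Wcoh (deg degV : Fin d → ℤ) (c : ℤ) : Submodule ℂ (Amb d) :=
  Finsupp.supported (Lam d) ℂ {p | dotZ p.1 degV + dotZ deg p.2 = c}

section Aux

lemma dotZ_add_left (a b n : Fin d → ℤ) : dotZ (a + b) n = dotZ a n + dotZ b n := by
  simp [dotZ, add_mul, Finset.sum_add_distrib]

lemma dotZ_add_right (m a b : Fin d → ℤ) : dotZ m (a + b) = dotZ m a + dotZ m b := by
  simp [dotZ, mul_add, Finset.sum_add_distrib]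

lemma wedgeA_single (m : Fin d → ℤ) (p : (Fin d → ℤ) × (Fin d → ℤ)) (v : Lam d) :
    wedgeA m (Finsupp.single p v) =
      Finsupp.single p (ExteriorAlgebra.ι ℂ (fun i => (m i : ℂ)) * v) := by
  simp [wedgeA, Finsupp.mapRange_single]

lemma contrA_single (n : Fin d → ℤ) (p : (Fin d → ℤ) × (Fin d → ℤ)) (v : Lam d) :
    contrA n (Finsupp.single p v) =
      Finsupp.single p
        (CliffordAlgebra.contractLeft (Q := (0 : QuadraticForm ℂ (Fin d → ℂ)))
          (∑ i, (n i : ℂ) • LinearMap.proj i) v) := by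
  simp [contrA, Finsupp.mapRange_single]

lemma shiftA_single (a p : (Fin d → ℤ) × (Fin d → ℤ)) (v : Lam d) :
    shiftA a (Finsupp.single p v) = Finsupp.single (p + a) v := by
  simp [shiftA, Finsupp.mapDomain_single]

lemma projA_single (KM KN : AddSubmonoid (Fin d → ℤ)) (p : (Fin d → ℤ) × (Fin d → ℤ))
    (v : Lam d) :
    projA KM KN (Finsupp.single p v) =
      if Adm KM KN p then Finsupp.single p v else 0 := by
  rw [projA, Finsupp.lsum_single]
  split_ifs <;> simp

lemma dA_single_mem (KM KN : AddSubmonoid (Fin d → ℤ)) (Δ ΔV : Finset (Fin d → ℤ))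
    (f g : (Fin d → ℤ) → ℂ) (x : Amb d) {W : Submodule ℂ (Amb d)}
    (hM : ∀ m ∈ Δ, projA KM KN (shiftA (m, 0) (wedgeA m x)) ∈ W)
    (hN : ∀ n ∈ ΔV, projA KM KN (shiftA (0, n) (contrA n x)) ∈ W) :
    dA KM KN Δ ΔV f g x ∈ W := by
  rw [dA, LinearMap.add_apply, LinearMap.sum_apply, LinearMap.sum_apply]
  refine Submodule.add_mem _ (Submodule.sum_mem _ fun m hm => ?_)
    (Submodule.sum_mem _ fun n hn => ?_)
  · simpa using Submodule.smul_mem _ (f m) (hM m hm)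
  · simpa using Submodule.smul_mem _ (g n) (hN n hn)

lemma contr_mem_piece (φ : Module.Dual ℂ (Fin d → ℂ)) (k : ℕ) :
    ∀ x ∈ LamPiece d (k + 1),
      CliffordAlgebra.contractLeft (Q := (0 : QuadraticForm ℂ (Fin d → ℂ))) φ x
        ∈ LamPiece d k := by
  induction k with
  | zero =>
    intro x hx
    rw [LamPiece, pow_one] at hx
    obtain ⟨m, rfl⟩ := hx
    rw [CliffordAlgebra.contractLeft_ι]
    rw [LamPiece, pow_zero]
    exact Submodule.mem_one.mpr ⟨φ m, rfl⟩
  | succ k ih =>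
    intro x hx
    rw [LamPiece, pow_succ'] at hx
    refine Submodule.mul_induction_on hx ?_ ?_
    · rintro a ⟨m, rfl⟩ y hy
      rw [CliffordAlgebra.contractLeft_ι_mul]
      refine Submodule.sub_mem _ (Submodule.smul_mem _ _ hy) ?_
      rw [LamPiece, pow_succ']
      exact Submodule.mul_mem_mul ⟨m, rfl⟩ (ih y hy)
    · intro a b ha hb
      rw [map_add]
      exact Submodule.add_mem _ ha hb

lemma single_mem_wconf (deg degV : Fin d → ℤ) {c : ℤ}
    (p : (Fin d → ℤ) × (Fin d → ℤ)) {k : ℕ} {v : Lam d} (hv : v ∈ LamPiece d k)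
    (h : -dotZ p.1 degV + dotZ deg p.2 + (k : ℤ) - dotZ deg degV = c) :
    Finsupp.single p v ∈ Wconf deg degV c := by
  refine Submodule.mem_iSup_of_mem p (Submodule.mem_iSup_of_mem k
    (Submodule.mem_iSup_of_mem h ?_))
  exact ⟨v, hv, rfl⟩

lemma dotZ_zero_left (n : Fin d → ℤ) : dotZ 0 n = 0 := by simp [dotZ]

lemma dotZ_zero_right (m : Fin d → ℤ) : dotZ m 0 = 0 := by simp [dotZ]

end Aux

set_option maxHeartbeats 1000000 in
/-- on `(ℂ[(K ⊕ K^∨)₀] ⊗ Λ^*(M_ℂ), d^A_{f,g})`, the conformal grading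
assigning to `[m ⊕ n] ⊗ P` the degree `−m·deg^∨ + deg·n + deg(P) − deg·deg^∨` is
preserved by `d^A_{f,g}`, while the grading `m·deg^∨ + deg·n` is increased by exactly
`1` by `d^A_{f,g}`. -/
theorem stmt11 (KM KN : AddSubmonoid (Fin d → ℤ))
    (hdualN : ∀ n, n ∈ KN ↔ ∀ m ∈ KM, 0 ≤ dotZ m n)
    (hdualM : ∀ m, m ∈ KM ↔ ∀ n ∈ KN, 0 ≤ dotZ m n)
    (deg degV : Fin d → ℤ) (hdeg : deg ∈ KM) (hdegV : degV ∈ KN)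
    (Δ ΔV : Finset (Fin d → ℤ))
    (hΔ : ∀ m, m ∈ Δ ↔ (m ∈ KM ∧ dotZ m degV = 1))
    (hΔV : ∀ n, n ∈ ΔV ↔ (n ∈ KN ∧ dotZ deg n = 1))
    (f g : (Fin d → ℤ) → ℂ) :
    (∀ c : ℤ, Submodule.map (dA KM KN Δ ΔV f g) (Wconf deg degV c) ≤ Wconf deg degV c) ∧
    (∀ c : ℤ, Submodule.map (dA KM KN Δ ΔV f g) (Wcoh deg degV c) ≤ Wcoh deg degV (c + 1)) := by
  have hD : ∀ m ∈ Δ, dotZ m degV = 1 := fun m hm => ((hΔ m).1 hm).2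
  have hDV : ∀ n ∈ ΔV, dotZ deg n = 1 := fun n hn => ((hΔV n).1 hn).2
  constructor
  · intro c
    rw [Wconf, Submodule.map_iSup]
    refine iSup_le fun p => ?_
    rw [Submodule.map_iSup]
    refine iSup_le fun k => ?_
    rw [Submodule.map_iSup]
    refine iSup_le fun h => ?_
    rw [Submodule.map_le_iff_le_comap]
    rintro x ⟨v, hv, rfl⟩
    rw [Submodule.mem_comap, Finsupp.lsingle_apply]
    refine dA_single_mem KM KN Δ ΔV f g _ ?_ ?_
    · intro m hm
      rw [wedgeA_single, shiftA_single, projA_single]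
      split_ifs with hA
      · refine single_mem_wconf deg degV (k := k + 1) _ ?_ ?_
        · rw [LamPiece, pow_succ']
          exact Submodule.mul_mem_mul ⟨_, rfl⟩ hv
        · have h1 := hD m hm
          simp only [Prod.fst_add, Prod.snd_add, dotZ_add_left, dotZ_add_right,
            dotZ_zero_left, dotZ_zero_right, add_zero]
          push_cast
          push_cast at h
          linarith
      · exact Submodule.zero_mem _
    · intro n hn
      rcases k with _ | k
      · rw [LamPiece, pow_zero] at hv
        obtain ⟨r, rfl⟩ := Submodule.mem_one.mp hv
        rw [contrA_single, CliffordAlgebra.contractLeft_algebraMap, Finsupp.single_zero,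
          map_zero, map_zero]
        exact Submodule.zero_mem _
      · rw [contrA_single, shiftA_single, projA_single]
        split_ifs with hA
        · refine single_mem_wconf deg degV _ (contr_mem_piece _ k v hv) ?_
          have h1 := hDV n hn
          simp only [Prod.fst_add, Prod.snd_add, dotZ_add_left, dotZ_add_right,
            dotZ_zero_left, dotZ_zero_right, add_zero]
          push_cast
          push_cast at h
          linarith
        · exact Submodule.zero_mem _
  · intro c
    rw [Submodule.map_le_iff_le_comap]
    intro x hx
    rw [Wcoh, Finsupp.mem_supported] at hx
    rw [Submodule.mem_comap, ← Finsupp.sum_single x, Finsupp.sum, map_sum]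
    refine Submodule.sum_mem _ fun p hp => ?_
    have hpc : dotZ p.1 degV + dotZ deg p.2 = c := hx hp
    refine dA_single_mem KM KN Δ ΔV f g _ ?_ ?_
    · intro m hm
      rw [wedgeA_single, shiftA_single, projA_single]
      split_ifs with hA
      · refine Finsupp.single_mem_supported ℂ _ ?_
        have h1 := hD m hm
        simp only [Set.mem_setOf_eq]
        simp only [Prod.fst_add, Prod.snd_add, dotZ_add_left, dotZ_add_right,
          dotZ_zero_left, dotZ_zero_right, add_zero]
        linarith
      · exact Submodule.zero_mem _
    · intro n hn
      rw [contrA_single, shiftA_single, projA_single]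
      split_ifs with hA
      · refine Finsupp.single_mem_supported ℂ _ ?_
        have h1 := hDV n hn
        simp only [Set.mem_setOf_eq]
        simp only [Prod.fst_add, Prod.snd_add, dotZ_add_left, dotZ_add_right,
          dotZ_zero_left, dotZ_zero_right, add_zero]
        linarith
      · exact Submodule.zero_mem _


end
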